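/- arXiv:2308.11050 — 3 statements merged into one kernel-verified Lean document; each statement's English description precedes it below -/
import Mathlib

section
/- If p is a distribution on {0,1}^P such that there exists q : {0,...,n} → [0,1] with p_H(0) = q(|H|) for all H ⊆ P (with q(0) = 1), then p is symmetric. -/
open Finset

variable {P : Type*} [Fintype P] [DecidableEq P]

/-- Number of nonzero (i.e. `true`) entries of `x`. -/
def nnz (x : P → Bool) : ℕ := (Finset.univ.filter fun i => x i = true).card

/-- `p` is a probability distribution on `{0,1}^P`. -/
def IsDist (p : (P → Bool) → ℝ) : Prop :=
  (∀ x, 0 ≤ p x ∧ p x ≤ 1) ∧ ∑ x, p x = 1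

/-- `p` is symmetric: invariant under all permutations of `P`. -/
def SymmP (p : (P → Bool) → ℝ) : Prop :=
  ∀ (σ : Equiv.Perm P) (x : P → Bool), p (x ∘ σ) = p x

/-- The marginal `p_H` of `p` on a subset `H ⊆ P`. -/
def marginal (p : (P → Bool) → ℝ) (H : Finset P) (u : {i // i ∈ H} → Bool) : ℝ :=
  ∑ z ∈ Finset.univ.filter (fun z : P → Bool => ∀ i : {i // i ∈ H}, z i.1 = u i), p z

/-- The zero-marginal `p_H(𝟎)`: probability that all coordinates in `H` are `0`. -/
def zmarg (p : (P → Bool) → ℝ) (H : Finset P) : ℝ :=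
  ∑ z ∈ Finset.univ.filter (fun z : P → Bool => ∀ i ∈ H, z i = false), p z


lemma mobInner (S B : Finset P) (hB : B ⊆ S) :
    (∑ A ∈ S.powerset.filter (fun A => B ⊆ A), (-1:ℝ)^(S.card - A.card))
      = if B = S then 1 else 0 := by
  have hre : (∑ A ∈ S.powerset.filter (fun A => B ⊆ A), (-1:ℝ)^(S.card - A.card))
      = ∑ C ∈ (S \ B).powerset, (-1:ℝ)^((S \ B).card - C.card) := by
    refine Finset.sum_nbij' (i := fun A => A \ B) (j := fun C => B ∪ C) ?_ ?_ ?_ ?_ ?_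
    · intro A hA; rw [mem_filter, mem_powerset] at hA
      rw [mem_powerset]; exact sdiff_subset_sdiff hA.1 le_rfl
    · intro C hC; rw [mem_powerset] at hC
      rw [mem_filter, mem_powerset]
      exact ⟨union_subset hB (hC.trans sdiff_subset), subset_union_left⟩
    · intro A hA; rw [mem_filter] at hA
      rw [union_sdiff_self_eq_union, union_eq_right.2 hA.2]
    · intro C hC; rw [mem_powerset] at hC
      rw [union_sdiff_cancel_left ((Finset.sdiff_disjoint.mono_left hC).symm)]
    · intro A hA; rw [mem_filter, mem_powerset] at hA
      congr 1
      have h1 : (A \ B).card = A.card - B.card := card_sdiff_of_subset hA.2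
      have h2 : (S \ B).card = S.card - B.card := card_sdiff_of_subset hB
      have := card_le_card hA.1
      have := card_le_card hA.2
      rw [h1, h2]
      omega
  rw [hre]
  have : ∀ C ∈ (S \ B).powerset, (-1:ℝ)^((S \ B).card - C.card)
      = (-1:ℝ)^(S \ B).card * (-1:ℝ)^C.card := by
    intro C hC; rw [mem_powerset] at hC
    have hc := card_le_card hC
    rw [← pow_add, show (S \ B).card + C.card = ((S \ B).card - C.card) + 2 * C.card by omega,
      pow_add, pow_mul]
    norm_num
  rw [Finset.sum_congr rfl this, ← Finset.mul_sum]
  have hz : (∑ C ∈ (S \ B).powerset, (-1:ℝ)^C.card) = if S \ B = ∅ then 1 else 0 := by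
    have := Finset.sum_powerset_neg_one_pow_card (x := S \ B)
    have hcast := congrArg (fun z : ℤ => (z : ℝ)) this
    push_cast at hcast
    convert hcast using 2 <;> simp
  rw [hz]
  have heq : S \ B = ∅ ↔ B = S := by
    rw [sdiff_eq_empty_iff_subset]
    exact ⟨fun h => subset_antisymm hB h, fun h => h ▸ le_rfl⟩
  by_cases h : B = S
  · simp [h]
  · rw [if_neg h, if_neg (fun hh => h (heq.1 hh))]; ring


-- Möbius inversion on the powerset lattice
lemma mob (f : Finset P → ℝ) (S : Finset P) :
    ∑ A ∈ S.powerset, (-1:ℝ)^(S.card - A.card) * ∑ B ∈ A.powerset, f B = f S := by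
  have h1 : ∑ A ∈ S.powerset, (-1:ℝ)^(S.card - A.card) * ∑ B ∈ A.powerset, f B
      = ∑ A ∈ S.powerset, ∑ B ∈ A.powerset, (-1:ℝ)^(S.card - A.card) * f B := by
    simp [Finset.mul_sum]
  rw [h1, Finset.sum_comm' (t' := S.powerset)
      (s' := fun B => S.powerset.filter (fun A => B ⊆ A)) (by
    intro A B
    simp only [mem_powerset, mem_filter]
    constructor
    · rintro ⟨hA, hB⟩; exact ⟨⟨hA, hB⟩, hB.trans hA⟩
    · rintro ⟨⟨hA, hB⟩, _⟩; exact ⟨hA, hB⟩)]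
  have : ∀ B ∈ S.powerset, (∑ A ∈ S.powerset.filter (fun A => B ⊆ A),
      (-1:ℝ)^(S.card - A.card) * f B) = (if B = S then 1 else 0) * f B := by
    intro B hB
    rw [← Finset.sum_mul, mobInner S B (mem_powerset.1 hB)]
  rw [Finset.sum_congr rfl this]
  simp

lemma supp_indicator (x : P → Bool) :
    (fun i => decide (i ∈ Finset.univ.filter fun j => x j = true)) = x := by
  funext i
  cases h : x i <;> simp [h]

lemma zmarg_compl (p : (P → Bool) → ℝ) (A : Finset P) :
    zmarg p Aᶜ = ∑ B ∈ A.powerset, p (fun i => decide (i ∈ B)) := by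
  unfold zmarg
  refine Finset.sum_nbij' (i := fun z => Finset.univ.filter fun j => z j = true)
    (j := fun B => fun i => decide (i ∈ B)) ?_ ?_ ?_ ?_ ?_
  · intro z hz
    rw [mem_filter] at hz
    rw [mem_powerset]
    intro i hi
    rw [mem_filter] at hi
    by_contra hiA
    have := hz.2 i (by simpa using hiA)
    rw [this] at hi; simp at hi
  · intro B hB
    rw [mem_powerset] at hB
    rw [mem_filter]
    refine ⟨mem_univ _, fun i hi => ?_⟩
    rw [Finset.mem_compl] at hi
    simp only [decide_eq_false_iff_not]
    exact fun h => hi (hB h)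
  · intro z hz
    exact supp_indicator z
  · intro B hB
    ext i; simp
  · intro z hz
    rw [show (fun i => decide (i ∈ (fun z => filter (fun j => z j = true) univ) z)) = z from supp_indicator z]

lemma p_formula (p : (P → Bool) → ℝ) (x : P → Bool) :
    p x = ∑ A ∈ (Finset.univ.filter fun j => x j = true).powerset,
      (-1:ℝ)^((Finset.univ.filter fun j => x j = true).card - A.card) * zmarg p Aᶜ := by
  have := mob (fun B => p (fun i => decide (i ∈ B))) (Finset.univ.filter fun j => x j = true)
  simp only [supp_indicator] at this
  rw [← this]
  refine Finset.sum_congr rfl fun A _ => ?_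
  rw [zmarg_compl]

theorem stmt_4 (p : (P → Bool) → ℝ) (hp : IsDist p) (q : ℕ → ℝ)
    (hq01 : ∀ h ≤ Fintype.card P, 0 ≤ q h ∧ q h ≤ 1) (hq0 : q 0 = 1)
    (hq : ∀ H : Finset P, zmarg p H = q H.card) :
    SymmP p := by
  have nnz_eq : ∀ (σ : Equiv.Perm P) (x : P → Bool), nnz (x ∘ σ) = nnz x := by
    intro σ x
    unfold nnz
    refine Finset.card_bij (fun i _ => σ i) ?_ ?_ ?_
    · intro i hi; simpa using (mem_filter.1 hi).2
    · intro a _ b _ h; exact σ.injective h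
    · intro j hj
      refine ⟨σ.symm j, ?_, by simp⟩
      simp only [mem_filter, mem_univ, true_and, Function.comp_apply, Equiv.apply_symm_apply]
      simpa using (mem_filter.1 hj).2
  have key : ∀ y : P → Bool, p y = ∑ j ∈ Finset.range (nnz y + 1),
      (-1:ℝ)^(nnz y - j) * (Nat.choose (nnz y) j) * q (Fintype.card P - j) := by
    intro y
    rw [p_formula p y]
    have hsum : ∀ A ∈ (Finset.univ.filter fun j => y j = true).powerset,
        (-1:ℝ)^((Finset.univ.filter fun j => y j = true).card - A.card) * zmarg p Aᶜ
        = (-1:ℝ)^(nnz y - A.card) * q (Fintype.card P - A.card) := by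
      intro A _
      rw [hq Aᶜ, Finset.card_compl]
      rfl
    rw [Finset.sum_congr rfl hsum, Finset.sum_powerset]
    refine Finset.sum_congr rfl fun j hj => ?_
    have : ∀ A ∈ Finset.powersetCard j (Finset.univ.filter fun i => y i = true),
        (-1:ℝ)^(nnz y - A.card) * q (Fintype.card P - A.card)
        = (-1:ℝ)^(nnz y - j) * q (Fintype.card P - j) := by
      intro A hA
      rw [(Finset.mem_powersetCard.1 hA).2]
    rw [Finset.sum_congr rfl this, Finset.sum_const, Finset.card_powersetCard]
    show ((Nat.choose (nnz y) j) : ℕ) • _ = _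
    rw [nsmul_eq_mul]
    ring
  intro σ x
  rw [key (x ∘ σ), key x, nnz_eq σ x]
end

section
/- Let p be a distribution on {0,1}^P with |P| = n, and suppose there is q : {0,...,n} → [0,1] with p_H(0) = q(|H|) for all H ⊆ P. Define w recursively by w(0) = q(n) and w(k) = q(n−k) − ∑_{i=0}^{k−1} C(k,i) w(i) for k = 1,...,n. Then p(x) = w(nnz(x)) for all x ∈ {0,1}^P. -/
open Finset

variable {P : Type*} [Fintype P] [DecidableEq P]

theorem stmt_7 (p : (P → Bool) → ℝ) (hp : IsDist p) (q : ℕ → ℝ)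
    (hq01 : ∀ h ≤ Fintype.card P, 0 ≤ q h ∧ q h ≤ 1)
    (hq : ∀ H : Finset P, zmarg p H = q H.card)
    (w : ℕ → ℝ) (hw0 : w 0 = q (Fintype.card P))
    (hwk : ∀ k, 1 ≤ k → k ≤ Fintype.card P →
      w k = q (Fintype.card P - k) - ∑ i ∈ Finset.range k, (k.choose i : ℝ) * w i) :
    ∀ x : P → Bool, p x = w (nnz x) := by
  suffices h : ∀ k, ∀ x : P → Bool, nnz x = k → p x = w k by
    intro x; exact h _ x rfl
  intro k
  induction k using Nat.strong_induction_on with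
  | _ k ih =>
    intro x hx
    set S : Finset P := Finset.univ.filter fun i => x i = true with hSdef
    have hS : S.card = k := hx
    have hk_le : k ≤ Fintype.card P := by
      rw [← hS]; exact (Finset.card_le_card (Finset.subset_univ S)).trans_eq Finset.card_univ
    have hmarg := hq Sᶜ
    rw [Finset.card_compl, hS] at hmarg
    -- rewrite the zmarg sum as a sum over subsets of S
    have hsum : zmarg p Sᶜ = ∑ T ∈ S.powerset, p (fun i => decide (i ∈ T)) := by
      rw [zmarg]
      refine Finset.sum_bij' (fun z _ => Finset.univ.filter fun i => z i = true)
        (fun T _ => fun i => decide (i ∈ T)) ?_ ?_ ?_ ?_ ?_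
      · intro z hz
        simp only [Finset.mem_filter, Finset.mem_univ, true_and, Finset.mem_compl] at hz
        rw [Finset.mem_powerset]
        intro i hi
        simp only [Finset.mem_filter, Finset.mem_univ, true_and] at hi
        by_contra hiS
        have := hz i hiS
        rw [hi] at this; exact Bool.noConfusion this
      · intro T hT
        simp only [Finset.mem_filter, Finset.mem_univ, true_and, Finset.mem_compl]
        intro i hiS
        rw [Finset.mem_powerset] at hT
        simp only [decide_eq_false_iff_not]
        intro hiT; exact hiS (hT hiT)
      · intro z hz
        funext i
        simp only [Finset.mem_filter, Finset.mem_univ, true_and]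
        cases h : z i <;> simp [h]
      · intro T hT
        ext i
        simp
      · intro z hz; congr 1; funext i; simp
    have hindS : (fun i => decide (i ∈ S)) = x := by
      funext i
      simp only [hSdef, Finset.mem_filter, Finset.mem_univ, true_and]
      cases h : x i <;> simp [h]
    have hSmem : S ∈ S.powerset := Finset.mem_powerset_self S
    have hsplit : ∑ T ∈ S.powerset, p (fun i => decide (i ∈ T))
        = p x + ∑ T ∈ S.powerset.erase S, p (fun i => decide (i ∈ T)) := by
      rw [← Finset.add_sum_erase _ _ hSmem, hindS]
    have herase : ∀ T ∈ S.powerset.erase S, p (fun i => decide (i ∈ T)) = w T.card := by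
      intro T hT
      rw [Finset.mem_erase, Finset.mem_powerset] at hT
      have hss : T ⊂ S := lt_of_le_of_ne hT.2 hT.1
      have hlt : T.card < k := hS ▸ Finset.card_lt_card hss
      have hnnz : nnz (fun i => decide (i ∈ T)) = T.card := by
        unfold nnz
        congr 1
        ext i; simp
      rw [← hnnz] at hlt ⊢
      exact ih _ hlt _ rfl
    have hpow : ∑ T ∈ S.powerset, w T.card
        = ∑ i ∈ Finset.range (k + 1), (k.choose i : ℝ) * w i := by
      rw [Finset.sum_powerset]
      rw [hS]
      refine Finset.sum_congr rfl fun i hi => ?_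
      rw [Finset.sum_congr rfl (fun T hT => by
        rw [(Finset.mem_powersetCard.mp hT).2]), Finset.sum_const,
        Finset.card_powersetCard, hS, nsmul_eq_mul]
    have hpow2 : ∑ T ∈ S.powerset, w T.card = w k + ∑ T ∈ S.powerset.erase S, w T.card := by
      rw [← Finset.add_sum_erase _ _ hSmem, hS]
    have hrange : ∑ i ∈ Finset.range (k + 1), (k.choose i : ℝ) * w i
        = ∑ i ∈ Finset.range k, (k.choose i : ℝ) * w i + w k := by
      rw [Finset.sum_range_succ, Nat.choose_self]; push_cast; ring
    rcases Nat.eq_zero_or_pos k with hk0 | hkpos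
    · subst hk0
      have hSempty : S = ∅ := Finset.card_eq_zero.mp hS
      have hqx : q (Fintype.card P) = p x := by
        rw [← Nat.sub_zero (Fintype.card P), ← hmarg, hsum, hSempty,
          Finset.powerset_empty, Finset.sum_singleton, ← hSempty, hindS]
      rw [hw0, hqx]
    · have heq : ∑ T ∈ S.powerset.erase S, p (fun i => decide (i ∈ T))
          = ∑ i ∈ Finset.range k, (k.choose i : ℝ) * w i := by
        rw [Finset.sum_congr rfl herase]
        have := hpow
        rw [hpow2, hrange] at this
        linarith
      have := hwk k hkpos hk_le
      rw [← hmarg, hsum, hsplit, heq] at this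
      linarith
end

section
/- Let p be a symmetric distribution on {0,1}^P with zero-marginal function q (so p_H(0) = q(|H|)). Then q is completely monotone in the discrete sense along the recursion: for each k, q(n−k) − ∑_{i=0}^{k−1} C(k,i) w(i) = w(k) ≥ 0, where w(0) = q(n) and w is defined by that recursion; i.e., the recursively defined w is nonnegative. -/
open Finset

variable {P : Type*} [Fintype P] [DecidableEq P]

lemma symm_eq_of_nnz (p : (P → Bool) → ℝ) (hs : SymmP p) (x y : P → Bool)
    (h : nnz x = nnz y) : p x = p y := by
  classical
  have hc1 : Fintype.card {i // y i = true} = Fintype.card {i // x i = true} := by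
    simp only [Fintype.card_subtype]
    exact h.symm
  have hc2 : Fintype.card {i // ¬ (y i = true)} = Fintype.card {i // ¬ (x i = true)} := by
    rw [Fintype.card_subtype_compl, Fintype.card_subtype_compl, hc1]
  let e1 := Fintype.equivOfCardEq hc1
  let e2 := Fintype.equivOfCardEq hc2
  let σ : Equiv.Perm P :=
    (Equiv.sumCompl (fun i => y i = true)).symm.trans
      ((e1.sumCongr e2).trans (Equiv.sumCompl (fun i => x i = true)))
  have hxy : x ∘ σ = y := by
    funext i
    by_cases hi : y i = true
    · have : σ i = (e1 ⟨i, hi⟩ : P) := by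
        simp only [σ, Equiv.trans_apply]
        rw [Equiv.sumCompl_symm_apply_of_pos (p := fun j => y j = true) (a := i) hi]
        rfl
      simp only [Function.comp_apply, this]
      rw [(e1 ⟨i, hi⟩).2, hi]
    · have : σ i = (e2 ⟨i, hi⟩ : P) := by
        simp only [σ, Equiv.trans_apply]
        rw [Equiv.sumCompl_symm_apply_of_neg (p := fun j => y j = true) (a := i) hi]
        rfl
      simp only [Function.comp_apply, this]
      have := (e2 ⟨i, hi⟩).2
      simp only [Bool.not_eq_true] at this hi ⊢
      rw [this, hi]
  rw [← hxy, hs σ x]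

lemma nnz_indicator (S : Finset P) : nnz (fun i => decide (i ∈ S)) = S.card := by
  unfold nnz
  congr 1
  ext i
  simp

lemma zmarg_compl_eq_sum_powerset (p : (P → Bool) → ℝ) (K : Finset P) :
    zmarg p Kᶜ = ∑ S ∈ K.powerset, p (fun i => decide (i ∈ S)) := by
  classical
  unfold zmarg
  refine Finset.sum_nbij' (fun z => Finset.univ.filter (fun i => z i = true))
    (fun S => fun i => decide (i ∈ S)) ?_ ?_ ?_ ?_ ?_
  · intro z hz
    simp only [Finset.mem_filter, Finset.mem_univ, true_and] at hz
    simp only [Finset.mem_powerset]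
    intro i hi
    simp only [Finset.mem_filter, Finset.mem_univ, true_and] at hi
    by_contra hiK
    have := hz i (by simpa using hiK)
    simp [this] at hi
  · intro S hS
    simp only [Finset.mem_powerset] at hS
    simp only [Finset.mem_filter, Finset.mem_univ, true_and]
    intro i hi
    simp only [Finset.mem_compl] at hi
    exact decide_eq_false (fun h => hi (hS h))
  · intro z hz
    funext i
    simp only [Finset.mem_filter, Finset.mem_univ, true_and]
    cases h : z i <;> simp [h]
  · intro S hS
    ext i
    simp
  · intro z hz
    have h2 : (fun i => decide (i ∈ Finset.univ.filter (fun j => z j = true))) = z := by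
      funext i
      simp only [Finset.mem_filter, Finset.mem_univ, true_and]
      cases h : z i <;> simp [h]
    simp only [h2]

theorem stmt_15 (p : (P → Bool) → ℝ) (hp : IsDist p) (hs : SymmP p)
    (q : ℕ → ℝ) (hq0 : q 0 = 1)
    (hq : ∀ H : Finset P, zmarg p H = q H.card)
    (w : ℕ → ℝ) (hw0 : w 0 = q (Fintype.card P))
    (hwk : ∀ k, 1 ≤ k → k ≤ Fintype.card P →
      w k = q (Fintype.card P - k) - ∑ i ∈ Finset.range k, (k.choose i : ℝ) * w i) :
    ∀ k ≤ Fintype.card P, 0 ≤ w k := by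
  classical
  set n := Fintype.card P with hn
  -- the common value of p on inputs with exactly k ones
  let f : ℕ → ℝ := fun k =>
    if h : ∃ K : Finset P, K.card = k then p (fun i => decide (i ∈ h.choose)) else 0
  have hf : ∀ S : Finset P, p (fun i => decide (i ∈ S)) = f S.card := by
    intro S
    have h : ∃ K : Finset P, K.card = S.card := ⟨S, rfl⟩
    simp only [f, dif_pos h]
    exact symm_eq_of_nnz p hs _ _ (by rw [nnz_indicator, nnz_indicator, h.choose_spec])
  have hfnn : ∀ k, 0 ≤ f k := by
    intro k
    by_cases h : ∃ K : Finset P, K.card = k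
    · simp only [f, dif_pos h]; exact (hp.1 _).1
    · simp only [f, dif_neg h]; exact le_refl 0
  -- key identity
  have key : ∀ K : Finset P,
      q (n - K.card) = ∑ j ∈ Finset.range (K.card + 1), (K.card.choose j : ℝ) * f j := by
    intro K
    have h1 : zmarg p Kᶜ = q (n - K.card) := by
      rw [hq Kᶜ, Finset.card_compl]
    rw [← h1, zmarg_compl_eq_sum_powerset]
    rw [Finset.sum_powerset]
    refine Finset.sum_congr rfl ?_
    intro j hj
    have : ∀ S ∈ K.powersetCard j, p (fun i => decide (i ∈ S)) = f j := by
      intro S hS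
      rw [hf S, (Finset.mem_powersetCard.mp hS).2]
    rw [Finset.sum_congr rfl this, Finset.sum_const, Finset.card_powersetCard,
      nsmul_eq_mul]
  -- w k = f k for k ≤ n
  have main : ∀ k, k ≤ n → w k = f k := by
    intro k
    induction k using Nat.strong_induction_on with
    | _ k ih =>
      intro hk
      rcases Nat.eq_zero_or_pos k with rfl | hk1
      · obtain ⟨K, hK⟩ := Finset.exists_subset_card_eq (s := (Finset.univ : Finset P)) (n := 0) (by simp)
        have h0 : K = ∅ := Finset.card_eq_zero.mp hK.2
        have := key K
        rw [hK.2] at this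
        simp only [Nat.sub_zero, Finset.range_one, Finset.sum_singleton,
          Nat.choose_self, Nat.cast_one, one_mul] at this
        rw [hw0, this]
        norm_num
      · obtain ⟨K, hKsub, hK⟩ := Finset.exists_subset_card_eq (s := (Finset.univ : Finset P)) (n := k)
          (by simpa [hn] using hk)
        have hkey := key K
        rw [hK] at hkey
        rw [hwk k hk1 hk, hkey, Finset.sum_range_succ]
        have : ∑ i ∈ Finset.range k, (k.choose i : ℝ) * w i
            = ∑ i ∈ Finset.range k, (k.choose i : ℝ) * f i := by
          refine Finset.sum_congr rfl ?_
          intro i hi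
          rw [ih i (Finset.mem_range.mp hi) (le_trans (Nat.le_of_lt (Finset.mem_range.mp hi)) hk)]
        rw [this]
        simp
  intro k hk
  rw [main k hk]
  exact hfnn k
end
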